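/- Invariance under smooth reparametrization: let w be (γ,ρ)-irregular and τ : [0,T] → [τ(0),τ(T)] a C^{1+β}-diffeomorphism with β + γ > 1. Then w̃_r := w_{τ^{-1}(r)} is (γ,ρ)-irregular and ‖Φ^{w̃}‖_{W^{γ,ρ}} ≲ ‖τ^{-1}‖_{C^{1+β}} ‖τ‖_{C^{1+β}} ‖Φ^w‖_{W^{γ,ρ}}. -/

import Mathlib

open MeasureTheory Real

noncomputable section

/-- `Φ^w_{s,t}(ξ) = ∫_s^t exp(i ξ · w_r) dr`. -/
def phiW {d : ℕ} (w : ℝ → EuclideanSpace ℝ (Fin d)) (ξ : EuclideanSpace ℝ (Fin d))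
    (s t : ℝ) : ℂ :=
  ∫ r in s..t, Complex.exp (Complex.I * ((inner ℝ ξ (w r) : ℝ) : ℂ))

/-- `w` is `(γ,ρ)`-irregular on `[0,T]` with constant `C`. -/
def IsIrregularWith {d : ℕ} (T γ ρ C : ℝ) (w : ℝ → EuclideanSpace ℝ (Fin d)) : Prop :=
  ∀ ξ : EuclideanSpace ℝ (Fin d), ξ ≠ 0 → ∀ s t : ℝ, 0 ≤ s → s ≤ t → t ≤ T →
    ‖phiW w ξ s t‖ ≤ C * ‖ξ‖ ^ (-ρ) * (t - s) ^ γ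

lemma sum_range_two_mul {M : Type*} [AddCommMonoid M] (m : ℕ) (a : ℕ → M) :
    ∑ j ∈ Finset.range (2 * m), a j
      = ∑ k ∈ Finset.range m, (a (2 * k) + a (2 * k + 1)) := by
  induction m with
  | zero => simp
  | succ m ih =>
    have h2 : 2 * (m + 1) = (2 * m) + 1 + 1 := by ring
    rw [h2, Finset.sum_range_succ, Finset.sum_range_succ, ih, Finset.sum_range_succ]
    rw [add_assoc]

lemma continuousOn_of_holder {g : ℝ → ℝ} {s : Set ℝ} {Nh β : ℝ} (hβ : 0 < β)
    (hg : ∀ u ∈ s, ∀ v ∈ s, |g v - g u| ≤ Nh * |v - u| ^ β) : ContinuousOn g s := by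
  intro x hx
  have key : ∀ v ∈ s, dist (g v) (g x) ≤ Nh * |v - x| ^ β := by
    intro v hv
    rw [Real.dist_eq]
    exact hg x hx v hv
  have hcont : ContinuousAt (fun v => Nh * |v - x| ^ β) x := by
    have h1 : ContinuousAt (fun v : ℝ => |v - x|) x := by
      exact ((continuous_id.sub continuous_const).abs).continuousAt
    apply continuousAt_const.mul
    apply h1.rpow_const
    right; exact hβ.le
  have hlim : Filter.Tendsto (fun v => Nh * |v - x| ^ β) (nhdsWithin x s) (nhds 0) := by
    have := hcont.continuousWithinAt (s := s)
    have h0 : Nh * |x - x| ^ β = 0 := by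
      simp [Real.zero_rpow hβ.ne']
    rw [ContinuousWithinAt, h0] at this
    exact this
  rw [ContinuousWithinAt, tendsto_iff_dist_tendsto_zero]
  apply squeeze_zero'
  · exact Filter.Eventually.of_forall fun v => dist_nonneg
  · exact eventually_nhdsWithin_of_forall key
  · exact hlim

set_option maxHeartbeats 1000000 in
lemma young_estimate {f : ℝ → ℂ} {g : ℝ → ℝ} {c d Nb Nh Kρ γ β : ℝ}
    (hcd : c ≤ d) (hγ : 0 < γ) (hβ : 0 < β) (hβγ : 1 < β + γ)
    (hNb : 0 ≤ Nb) (hNh : 0 ≤ Nh) (hK : 0 ≤ Kρ)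
    (hfm : Measurable f) (hf1 : ∀ r, ‖f r‖ ≤ 1)
    (hgb : ∀ u ∈ Set.Icc c d, |g u| ≤ Nb)
    (hgc : ContinuousOn g (Set.Icc c d))
    (hgh : ∀ u ∈ Set.Icc c d, ∀ v ∈ Set.Icc c d, |g v - g u| ≤ Nh * |v - u| ^ β)
    (hF : ∀ u v : ℝ, c ≤ u → u ≤ v → v ≤ d → ‖∫ r in u..v, f r‖ ≤ Kρ * (v - u) ^ γ) :
    ‖∫ r in c..d, g r • f r‖ ≤
      Nb * (Kρ * (d - c) ^ γ)
        + Nh * Kρ * (d - c) ^ (β + γ) * (1 - (2:ℝ) ^ (1 - β - γ))⁻¹ := by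
  -- basic quantities
  set q : ℝ := (2:ℝ) ^ (1 - β - γ) with hqdef
  have hq0 : 0 < q := Real.rpow_pos_of_pos two_pos _
  have hq1 : q < 1 := Real.rpow_lt_one_of_one_lt_of_neg one_lt_two (by linarith)
  have hqi : 0 < (1 - q)⁻¹ := inv_pos.2 (by linarith)
  set L : ℝ := d - c with hLdef
  have hL : 0 ≤ L := sub_nonneg.2 hcd
  -- partition points
  set p : ℕ → ℕ → ℝ := fun n k => c + L * k / 2 ^ n with hpdef
  have h2n : ∀ n : ℕ, (0:ℝ) < 2 ^ n := fun n => by positivity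
  have hp0 : ∀ n, p n 0 = c := by intro n; simp [hpdef]
  have hpend : ∀ n, p n (2 ^ n) = d := by
    intro n
    have : ((2 ^ n : ℕ) : ℝ) = 2 ^ n := by push_cast; ring
    simp only [hpdef]; push_cast; rw [mul_div_assoc, div_self (h2n n).ne', mul_one, hLdef]
    ring
  have hdiff : ∀ n k, p n (k + 1) - p n k = L / 2 ^ n := by
    intro n k; simp only [hpdef]; push_cast; field_simp; ring
  have hmono : ∀ n k j, k ≤ j → p n k ≤ p n j := by
    intro n k j hkj
    simp only [hpdef]
    gcongr
  have hple : ∀ n k, p n k ≤ p n (k + 1) := fun n k => hmono n k (k + 1) (Nat.le_succ k)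
  have hmem : ∀ n k, k ≤ 2 ^ n → p n k ∈ Set.Icc c d := by
    intro n k hk
    constructor
    · have := hmono n 0 k (Nat.zero_le k); rw [hp0 n] at this; exact this
    · have := hmono n k (2 ^ n) hk; rw [hpend n] at this; exact this
  have hdouble : ∀ n k, p (n + 1) (2 * k) = p n k := by
    intro n k; simp only [hpdef]; push_cast; field_simp; ring
  -- integrability
  have hfi : ∀ a b : ℝ, IntervalIntegrable f volume a b := by
    intro a b
    apply (intervalIntegrable_const (c := (1:ℝ))).mono_fun
      hfm.aestronglyMeasurable.restrict
    refine Filter.Eventually.of_forall fun x => ?_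
    simpa using hf1 x
  have hgfi : ∀ a b : ℝ, a ∈ Set.Icc c d → b ∈ Set.Icc c d →
      IntervalIntegrable (fun r => g r • f r) volume a b := by
    intro a b ha hb
    have hsub : Set.uIoc a b ⊆ Set.Icc c d := by
      refine Set.Subset.trans Set.uIoc_subset_uIcc ?_
      exact Set.uIcc_subset_Icc ha hb
    rw [intervalIntegrable_iff]
    refine ⟨AEStronglyMeasurable.smul
        ((hgc.mono hsub).aestronglyMeasurable measurableSet_uIoc)
        hfm.aestronglyMeasurable.restrict, ?_⟩
    apply HasFiniteIntegral.restrict_of_bounded (C := Nb * 1) measure_Ioc_lt_top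
    apply ae_restrict_of_forall_mem measurableSet_uIoc
    intro x hx
    rw [norm_smul]
    have h1 : ‖g x‖ ≤ Nb := by rw [Real.norm_eq_abs]; exact hgb x (hsub hx)
    exact mul_le_mul h1 (hf1 x) (norm_nonneg _) hNb
  -- dyadic Riemann sums
  set S : ℕ → ℂ := fun n => ∑ k ∈ Finset.range (2 ^ n),
      g (p n k) • ∫ r in p n k..p n (k + 1), f r with hSdef
  have hsum : ∀ n : ℕ, (∫ r in c..d, g r • f r)
      = ∑ k ∈ Finset.range (2 ^ n), ∫ r in p n k..p n (k + 1), g r • f r := by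
    intro n
    have h := intervalIntegral.sum_integral_adjacent_intervals (a := p n) (μ := volume)
      (n := 2 ^ n) (f := fun r => g r • f r) ?_
    · rw [hp0, hpend] at h; exact h.symm
    · intro k hk
      exact hgfi _ _ (hmem n k hk.le) (hmem n (k + 1) hk)
  have claim1 : ∀ n : ℕ, ‖(∫ r in c..d, g r • f r) - S n‖
      ≤ Nh * (L / 2 ^ n) ^ β * L := by
    intro n
    rw [hsum n, hSdef, ← Finset.sum_sub_distrib]
    refine le_trans (norm_sum_le _ _) ?_
    have hpiece : ∀ k ∈ Finset.range (2 ^ n),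
        ‖(∫ r in p n k..p n (k + 1), g r • f r)
          - g (p n k) • ∫ r in p n k..p n (k + 1), f r‖
        ≤ Nh * (L / 2 ^ n) ^ β * (L / 2 ^ n) := by
      intro k hk
      rw [Finset.mem_range] at hk
      have hk1 : k + 1 ≤ 2 ^ n := hk
      have hmk := hmem n k hk.le
      have hmk1 := hmem n (k + 1) hk1
      have heq : (∫ r in p n k..p n (k + 1), g r • f r)
            - g (p n k) • ∫ r in p n k..p n (k + 1), f r
          = ∫ r in p n k..p n (k + 1), (g r - g (p n k)) • f r := by
        have hconst : IntervalIntegrable (fun x => g (p n k) • f x) volume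
            (p n k) (p n (k + 1)) := (hfi _ _).smul (g (p n k))
        simp_rw [sub_smul]
        rw [intervalIntegral.integral_sub (hgfi _ _ hmk hmk1) hconst,
          intervalIntegral.integral_smul]
      rw [heq]
      have hbd : ∀ x ∈ Set.uIoc (p n k) (p n (k + 1)),
          ‖(g x - g (p n k)) • f x‖ ≤ Nh * (L / 2 ^ n) ^ β := by
        intro x hx
        rw [Set.uIoc_of_le (hple n k)] at hx
        have hxm : x ∈ Set.Icc c d := ⟨le_trans hmk.1 hx.1.le, le_trans hx.2 hmk1.2⟩
        rw [norm_smul, Real.norm_eq_abs]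
        have h1 : |g x - g (p n k)| ≤ Nh * |x - p n k| ^ β := hgh _ hmk _ hxm
        have h2 : |x - p n k| ≤ L / 2 ^ n := by
          rw [abs_of_nonneg (by simpa using hx.1.le : (0:ℝ) ≤ x - p n k)]
          calc x - p n k ≤ p n (k + 1) - p n k := sub_le_sub_right hx.2 _
            _ = L / 2 ^ n := hdiff n k
        have h3 : |x - p n k| ^ β ≤ (L / 2 ^ n) ^ β :=
          Real.rpow_le_rpow (abs_nonneg _) h2 hβ.le
        calc |g x - g (p n k)| * ‖f x‖ ≤ (Nh * |x - p n k| ^ β) * 1 :=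
              mul_le_mul h1 (hf1 x) (norm_nonneg _)
                (le_trans (abs_nonneg _) h1)
          _ = Nh * |x - p n k| ^ β := mul_one _
          _ ≤ Nh * (L / 2 ^ n) ^ β := by nlinarith
      have h4 := intervalIntegral.norm_integral_le_of_norm_le_const hbd
      have h5 : |p n (k + 1) - p n k| = L / 2 ^ n := by
        rw [hdiff n k, abs_of_nonneg (div_nonneg hL (h2n n).le)]
      rw [h5] at h4
      exact h4
    refine le_trans (Finset.sum_le_sum hpiece) ?_
    rw [Finset.sum_const, Finset.card_range, nsmul_eq_mul]
    have : ((2 ^ n : ℕ) : ℝ) = 2 ^ n := by push_cast; ring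
    rw [this]
    have hx2 : (2:ℝ) ^ n * (Nh * (L / 2 ^ n) ^ β * (L / 2 ^ n)) = Nh * (L / 2 ^ n) ^ β * L := by
      field_simp
    exact le_of_eq hx2
  -- claim 2 : consecutive Riemann sums
  have claim2 : ∀ n : ℕ, ‖S (n + 1) - S n‖
      ≤ (2:ℝ) ^ n * (Nh * (L / 2 ^ (n + 1)) ^ β * (Kρ * (L / 2 ^ (n + 1)) ^ γ)) := by
    intro n
    have h2m : 2 ^ (n + 1) = 2 * 2 ^ n := by ring
    have hS1 : S (n + 1) = ∑ k ∈ Finset.range (2 ^ n),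
        (g (p (n + 1) (2 * k)) • (∫ r in p (n + 1) (2 * k)..p (n + 1) (2 * k + 1), f r)
          + g (p (n + 1) (2 * k + 1)) •
            (∫ r in p (n + 1) (2 * k + 1)..p (n + 1) (2 * k + 1 + 1), f r)) := by
      simp only [hSdef]
      rw [h2m, sum_range_two_mul]
    have hS0 : S n = ∑ k ∈ Finset.range (2 ^ n),
        (g (p n k) • (∫ r in p (n + 1) (2 * k)..p (n + 1) (2 * k + 1), f r)
          + g (p n k) • (∫ r in p (n + 1) (2 * k + 1)..p (n + 1) (2 * k + 1 + 1), f r)) := by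
      simp only [hSdef]
      refine Finset.sum_congr rfl fun k hk => ?_
      have e2 : p (n + 1) (2 * k + 1 + 1) = p n (k + 1) := by
        rw [show 2 * k + 1 + 1 = 2 * (k + 1) from by ring, hdouble n (k + 1)]
      rw [← smul_add,
        intervalIntegral.integral_add_adjacent_intervals (hfi _ _) (hfi _ _),
        hdouble n k, e2]
    rw [hS1, hS0, ← Finset.sum_sub_distrib]
    refine le_trans (norm_sum_le _ _) ?_
    have hterm : ∀ k ∈ Finset.range (2 ^ n),
        ‖(g (p (n + 1) (2 * k)) • (∫ r in p (n + 1) (2 * k)..p (n + 1) (2 * k + 1), f r)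
          + g (p (n + 1) (2 * k + 1)) •
            (∫ r in p (n + 1) (2 * k + 1)..p (n + 1) (2 * k + 1 + 1), f r))
         - (g (p n k) • (∫ r in p (n + 1) (2 * k)..p (n + 1) (2 * k + 1), f r)
          + g (p n k) • (∫ r in p (n + 1) (2 * k + 1)..p (n + 1) (2 * k + 1 + 1), f r))‖
        ≤ Nh * (L / 2 ^ (n + 1)) ^ β * (Kρ * (L / 2 ^ (n + 1)) ^ γ) := by
      intro k hk
      rw [Finset.mem_range] at hk
      have hk1 : 2 * k + 1 ≤ 2 ^ (n + 1) := by omega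
      have hk2 : 2 * k + 1 + 1 ≤ 2 ^ (n + 1) := by omega
      have hm1 := hmem (n + 1) (2 * k + 1) hk1
      have hm2 := hmem (n + 1) (2 * k + 1 + 1) hk2
      have hmk := hmem n k (le_of_lt hk)
      have e3 : (g (p (n + 1) (2 * k)) • (∫ r in p (n + 1) (2 * k)..p (n + 1) (2 * k + 1), f r)
          + g (p (n + 1) (2 * k + 1)) •
            (∫ r in p (n + 1) (2 * k + 1)..p (n + 1) (2 * k + 1 + 1), f r))
         - (g (p n k) • (∫ r in p (n + 1) (2 * k)..p (n + 1) (2 * k + 1), f r)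
          + g (p n k) • (∫ r in p (n + 1) (2 * k + 1)..p (n + 1) (2 * k + 1 + 1), f r))
          = (g (p (n + 1) (2 * k + 1)) - g (p n k)) •
              (∫ r in p (n + 1) (2 * k + 1)..p (n + 1) (2 * k + 1 + 1), f r) := by
        rw [hdouble n k, sub_smul]
        abel
      rw [e3, norm_smul, Real.norm_eq_abs]
      have h1 : |g (p (n + 1) (2 * k + 1)) - g (p n k)|
          ≤ Nh * (L / 2 ^ (n + 1)) ^ β := by
        have hd1 : |p (n + 1) (2 * k + 1) - p n k| = L / 2 ^ (n + 1) := by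
          rw [← hdouble n k, hdiff (n + 1) (2 * k),
            abs_of_nonneg (div_nonneg hL (h2n (n + 1)).le)]
        have := hgh (p n k) hmk (p (n + 1) (2 * k + 1)) hm1
        rw [hd1] at this
        exact this
      have h2 : ‖∫ r in p (n + 1) (2 * k + 1)..p (n + 1) (2 * k + 1 + 1), f r‖
          ≤ Kρ * (L / 2 ^ (n + 1)) ^ γ := by
        have := hF (p (n + 1) (2 * k + 1)) (p (n + 1) (2 * k + 1 + 1))
          hm1.1 (hple (n + 1) (2 * k + 1)) hm2.2
        rw [hdiff (n + 1) (2 * k + 1)] at this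
        exact this
      exact mul_le_mul h1 h2 (norm_nonneg _) (le_trans (abs_nonneg _) h1)
    refine le_trans (Finset.sum_le_sum hterm) ?_
    rw [Finset.sum_const, Finset.card_range, nsmul_eq_mul]
    have : ((2 ^ n : ℕ) : ℝ) = 2 ^ n := by push_cast; ring
    rw [this]
  -- trivial case c = d
  rcases eq_or_lt_of_le hcd with hceq | hclt
  · rw [← hceq, intervalIntegral.integral_same, norm_zero]
    have h1 : 0 ≤ Nb * (Kρ * L ^ γ) :=
      mul_nonneg hNb (mul_nonneg hK (Real.rpow_nonneg hL _))
    have h2 : 0 ≤ Nh * Kρ * L ^ (β + γ) * (1 - q)⁻¹ :=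
      mul_nonneg (mul_nonneg (mul_nonneg hNh hK) (Real.rpow_nonneg hL _)) hqi.le
    linarith
  have hLpos : 0 < L := sub_pos.2 hclt
  -- geometric form of claim 2
  have hq2 : ∀ n : ℕ, ‖S (n + 1) - S n‖ ≤ Nh * Kρ * L ^ (β + γ) * q ^ n := by
    intro n
    refine le_trans (claim2 n) ?_
    have h2p : (0:ℝ) < 2 ^ (n + 1) := h2n (n + 1)
    have e1 : Nh * (L / 2 ^ (n + 1)) ^ β * (Kρ * (L / 2 ^ (n + 1)) ^ γ)
        = Nh * Kρ * (L / 2 ^ (n + 1)) ^ (β + γ) := by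
      rw [Real.rpow_add (div_pos hLpos h2p)]
      ring
    rw [e1]
    have key : (2:ℝ) ^ n * (L / 2 ^ (n + 1)) ^ (β + γ) ≤ L ^ (β + γ) * q ^ n := by
      have e2 : (L / 2 ^ (n + 1)) ^ (β + γ)
          = L ^ (β + γ) / ((2:ℝ) ^ (n + 1)) ^ (β + γ) :=
        Real.div_rpow hLpos.le h2p.le _
      have e3 : ((2:ℝ) ^ (n + 1)) ^ (β + γ) = (2:ℝ) ^ (((n:ℝ) + 1) * (β + γ)) := by
        rw [← Real.rpow_natCast 2 (n + 1), ← Real.rpow_mul (by norm_num : (0:ℝ) ≤ 2)]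
        congr 1
        push_cast
        ring
      have e4 : (2:ℝ) ^ n = (2:ℝ) ^ ((n:ℝ)) := (Real.rpow_natCast 2 n).symm
      have e5 : q ^ n = (2:ℝ) ^ ((1 - β - γ) * (n:ℝ)) := by
        rw [hqdef, ← Real.rpow_natCast ((2:ℝ) ^ (1 - β - γ)) n,
          ← Real.rpow_mul (by norm_num : (0:ℝ) ≤ 2)]
      rw [e2, e3, e4, e5, div_eq_mul_inv, ← Real.rpow_neg (by norm_num : (0:ℝ) ≤ 2),
        show (2:ℝ) ^ ((n:ℝ)) * (L ^ (β + γ) * (2:ℝ) ^ (-(((n:ℝ) + 1) * (β + γ))))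
          = L ^ (β + γ) * ((2:ℝ) ^ ((n:ℝ)) * (2:ℝ) ^ (-(((n:ℝ) + 1) * (β + γ)))) from by ring,
        ← Real.rpow_add two_pos]
      refine mul_le_mul_of_nonneg_left ?_ (Real.rpow_nonneg hLpos.le _)
      apply Real.rpow_le_rpow_of_exponent_le one_le_two
      nlinarith [Nat.cast_nonneg (α := ℝ) n]
    calc (2:ℝ) ^ n * (Nh * Kρ * (L / 2 ^ (n + 1)) ^ (β + γ))
        = Nh * Kρ * ((2:ℝ) ^ n * (L / 2 ^ (n + 1)) ^ (β + γ)) := by ring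
      _ ≤ Nh * Kρ * (L ^ (β + γ) * q ^ n) :=
          mul_le_mul_of_nonneg_left key (mul_nonneg hNh hK)
      _ = Nh * Kρ * L ^ (β + γ) * q ^ n := by ring
  -- telescoping
  have htel : ∀ n : ℕ, ‖S n - S 0‖ ≤ Nh * Kρ * L ^ (β + γ) * (1 - q)⁻¹ := by
    intro n
    have e : S n - S 0 = ∑ j ∈ Finset.range n, (S (j + 1) - S j) :=
      (Finset.sum_range_sub S n).symm
    rw [e]
    refine le_trans (norm_sum_le _ _) ?_
    refine le_trans (Finset.sum_le_sum fun j _ => hq2 j) ?_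
    rw [← Finset.mul_sum]
    have hg : ∑ j ∈ Finset.range n, q ^ j ≤ (1 - q)⁻¹ :=
      le_trans (Summable.sum_le_tsum (Finset.range n) (fun i _ => pow_nonneg hq0.le i)
        (summable_geometric_of_lt_one hq0.le hq1))
        (le_of_eq (tsum_geometric_of_lt_one hq0.le hq1))
    have hD : 0 ≤ Nh * Kρ * L ^ (β + γ) :=
      mul_nonneg (mul_nonneg hNh hK) (Real.rpow_nonneg hL _)
    exact mul_le_mul_of_nonneg_left hg hD
  have hS0bound : ‖S 0‖ ≤ Nb * (Kρ * L ^ γ) := by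
    rw [hSdef]
    simp only [pow_zero, Finset.range_one, Finset.sum_singleton]
    rw [norm_smul, Real.norm_eq_abs]
    have h1 : |g (p 0 0)| ≤ Nb := hgb _ (hmem 0 0 (by norm_num))
    have h2 : ‖∫ r in (p 0 0)..(p 0 1), f r‖ ≤ Kρ * L ^ γ := by
      have h3 := hF (p 0 0) (p 0 1) (hmem 0 0 (by norm_num)).1 (hple 0 0)
        (hmem 0 1 (by norm_num)).2
      have hd : p 0 1 - p 0 0 = L := by rw [hdiff 0 0]; norm_num
      rw [hd] at h3
      exact h3
    exact mul_le_mul h1 h2 (norm_nonneg _) hNb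
  -- pass to the limit
  have hbound : ∀ n : ℕ, ‖∫ r in c..d, g r • f r‖
      ≤ Nh * (L / 2 ^ n) ^ β * L
        + (Nh * Kρ * L ^ (β + γ) * (1 - q)⁻¹ + Nb * (Kρ * L ^ γ)) := by
    intro n
    have hid : (∫ r in c..d, g r • f r)
        = ((∫ r in c..d, g r • f r) - S n) + (S n - S 0) + S 0 := by ring
    calc ‖∫ r in c..d, g r • f r‖
        = ‖((∫ r in c..d, g r • f r) - S n) + (S n - S 0) + S 0‖ := by rw [← hid]
      _ ≤ ‖(∫ r in c..d, g r • f r) - S n‖ + ‖S n - S 0‖ + ‖S 0‖ :=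
          norm_add₃_le
      _ ≤ Nh * (L / 2 ^ n) ^ β * L
          + (Nh * Kρ * L ^ (β + γ) * (1 - q)⁻¹ + Nb * (Kρ * L ^ γ)) := by
          have := add_le_add (add_le_add (claim1 n) (htel n)) hS0bound
          linarith
  have hr : ∀ n : ℕ, Nh * (L / 2 ^ n) ^ β * L
      = (Nh * L ^ β * L) * (((2:ℝ) ^ β)⁻¹) ^ n := by
    intro n
    have h5 : (L / 2 ^ n) ^ β = L ^ β * (((2:ℝ) ^ β)⁻¹) ^ n := by
      rw [Real.div_rpow hLpos.le (h2n n).le, div_eq_mul_inv, inv_pow]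
      congr 2
      rw [← Real.rpow_natCast 2 n, ← Real.rpow_mul (by norm_num : (0:ℝ) ≤ 2),
        ← Real.rpow_natCast ((2:ℝ) ^ β) n, ← Real.rpow_mul (by norm_num : (0:ℝ) ≤ 2)]
      congr 1
      ring
    rw [h5]
    ring
  have hrlt : ((2:ℝ) ^ β)⁻¹ < 1 := by
    rw [inv_lt_one_iff₀]
    right
    exact Real.one_lt_rpow_iff_of_pos two_pos |>.2 (Or.inl ⟨one_lt_two, hβ⟩)
  have hrpos : (0:ℝ) ≤ ((2:ℝ) ^ β)⁻¹ := by positivity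
  have hten : Filter.Tendsto (fun n : ℕ => Nh * (L / 2 ^ n) ^ β * L
      + (Nh * Kρ * L ^ (β + γ) * (1 - q)⁻¹ + Nb * (Kρ * L ^ γ))) Filter.atTop
      (nhds (0 + (Nh * Kρ * L ^ (β + γ) * (1 - q)⁻¹ + Nb * (Kρ * L ^ γ)))) := by
    apply Filter.Tendsto.add _ tendsto_const_nhds
    simp_rw [hr]
    have := (tendsto_pow_atTop_nhds_zero_of_lt_one hrpos hrlt).const_mul (Nh * L ^ β * L)
    simpa using this
  have hfin := ge_of_tendsto' hten hbound
  rw [zero_add] at hfin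
  linarith

set_option maxHeartbeats 1000000 in
/-- Invariance under smooth reparametrization: let `w` be `(γ,ρ)`-irregular with
constant `K` on `[0,T]` and let `τ : [0,T] → [τ(0),τ(T)]` be a `C^{1+β}`-diffeomorphism
(`β + γ > 1`), with derivative `τ'` bounded and `β`-Hölder with constant `N` and
inverse `σ` Lipschitz with constant `M` (so `N ≤ ‖τ‖_{C^{1+β}}`,
`M ≤ ‖τ^{-1}‖_{C^{1+β}}`).  Then `w̃ = w ∘ σ` is `(γ,ρ)`-irregular on `[τ(0),τ(T)]`
with `‖Φ^{w̃}‖_{W^{γ,ρ}} ≲ M N K`. -/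
theorem reparametrization_isIrregular {T γ ρ β : ℝ} (hT : 0 < T) (hγ : 0 < γ)
    (hγ1 : γ ≤ 1) (hρ : 0 < ρ) (hβ : 0 < β) (hβγ : 1 < β + γ) :
    ∃ C : ℝ, 0 < C ∧ ∀ (d : ℕ) (w : ℝ → EuclideanSpace ℝ (Fin d)), Measurable w →
      ∀ K : ℝ, IsIrregularWith T γ ρ K w →
      ∀ (τ τ' σ : ℝ → ℝ) (N M : ℝ), 1 ≤ N → 1 ≤ M →
        (∀ u ∈ Set.Icc (0 : ℝ) T, HasDerivAt τ (τ' u) u) →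
        (∀ u ∈ Set.Icc (0 : ℝ) T, |τ' u| ≤ N) →
        (∀ u ∈ Set.Icc (0 : ℝ) T, ∀ v ∈ Set.Icc (0 : ℝ) T,
          |τ' v - τ' u| ≤ N * |v - u| ^ β) →
        (∀ r ∈ Set.Icc (τ 0) (τ T), τ (σ r) = r ∧ σ r ∈ Set.Icc (0 : ℝ) T) →
        (∀ r ∈ Set.Icc (τ 0) (τ T), ∀ r' ∈ Set.Icc (τ 0) (τ T),
          |σ r - σ r'| ≤ M * |r - r'|) →
      ∀ ξ : EuclideanSpace ℝ (Fin d), ξ ≠ 0 → ∀ s t : ℝ, τ 0 ≤ s → s ≤ t → t ≤ τ T →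
        ‖∫ r in s..t, Complex.exp (Complex.I * ((inner ℝ ξ (w (σ r)) : ℝ) : ℂ))‖
          ≤ C * M * N * K * (t - s) ^ γ * ‖ξ‖ ^ (-ρ) := by
  have hq0 : (0:ℝ) < (2:ℝ) ^ (1 - β - γ) := Real.rpow_pos_of_pos two_pos _
  have hq1 : (2:ℝ) ^ (1 - β - γ) < 1 :=
    Real.rpow_lt_one_of_one_lt_of_neg one_lt_two (by linarith)
  set q : ℝ := (2:ℝ) ^ (1 - β - γ) with hqdef
  have hqi : 0 < (1 - q)⁻¹ := inv_pos.2 (by linarith)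
  have hTβ : (0:ℝ) < T ^ β := Real.rpow_pos_of_pos hT β
  refine ⟨1 + T ^ β * (1 - q)⁻¹, by positivity, ?_⟩
  intro d w hw K hirr τ τ' σ N M hN hM hτd hτb hτh hσinv hσlip ξ hξ s t hs hst ht
  have hN0 : (0:ℝ) ≤ N := le_trans zero_le_one hN
  have hM0 : (0:ℝ) ≤ M := le_trans zero_le_one hM
  set Kρ : ℝ := K * ‖ξ‖ ^ (-ρ) with hKdef
  have hKρ : 0 ≤ Kρ := by
    have h1 := hirr ξ hξ 0 T le_rfl hT.le le_rfl
    have h2 : (0:ℝ) < (T - 0) ^ γ := Real.rpow_pos_of_pos (by linarith) γ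
    have h3 : (0:ℝ) ≤ K * ‖ξ‖ ^ (-ρ) * (T - 0) ^ γ := le_trans (norm_nonneg _) h1
    nlinarith [h2, h3]
  have hsT : s ∈ Set.Icc (τ 0) (τ T) := ⟨hs, le_trans hst ht⟩
  have htT : t ∈ Set.Icc (τ 0) (τ T) := ⟨le_trans hs hst, ht⟩
  have hIccsub : Set.Icc s t ⊆ Set.Icc (τ 0) (τ T) := Set.Icc_subset_Icc hs ht
  have hσc : ContinuousOn σ (Set.Icc s t) := by
    have hlip : LipschitzOnWith (Real.toNNReal M) σ (Set.Icc (τ 0) (τ T)) := by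
      rw [lipschitzOnWith_iff_dist_le_mul]
      intro x hx y hy
      rw [Real.dist_eq, Real.dist_eq]
      calc |σ x - σ y| ≤ M * |x - y| := hσlip x hx y hy
        _ = Real.toNNReal M * |x - y| := by rw [Real.coe_toNNReal M hM0]
    exact hlip.continuousOn.mono hIccsub
  set A := σ '' Set.Icc s t with hAdef
  have hAIcc : A = Set.Icc (sInf A) (sSup A) := ContinuousOn.image_Icc hst hσc
  set a := sInf A with hadef
  set b := sSup A with hbdef
  have hane : (σ s) ∈ A := ⟨s, Set.left_mem_Icc.2 hst, rfl⟩
  have hab : a ≤ b := by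
    have h : σ s ∈ Set.Icc a b := by rw [← hAIcc]; exact hane
    exact le_trans h.1 h.2
  have haA : a ∈ A := by rw [hAIcc]; exact Set.left_mem_Icc.2 hab
  have hbA : b ∈ A := by rw [hAIcc]; exact Set.right_mem_Icc.2 hab
  have hAsub : A ⊆ Set.Icc 0 T := by
    rintro x ⟨r, hr, rfl⟩
    exact (hσinv r (hIccsub hr)).2
  have ha0 : 0 ≤ a := (hAsub haA).1
  have hbT : b ≤ T := (hAsub hbA).2
  have habsub : Set.Icc a b ⊆ Set.Icc 0 T := Set.Icc_subset_Icc ha0 hbT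
  obtain ⟨ra, hra, hraa⟩ := haA
  obtain ⟨rb, hrb, hrbb⟩ := hbA
  have hbaM : b - a ≤ M * (t - s) := by
    have h1 := hσlip rb (hIccsub hrb) ra (hIccsub hra)
    have h2 : |rb - ra| ≤ t - s := by
      rw [abs_le]
      constructor
      · linarith [hra.2, hrb.1]
      · linarith [hra.1, hrb.2]
    have h4 : 0 ≤ t - s := by linarith
    calc b - a = σ rb - σ ra := by rw [hraa, hrbb]
      _ ≤ |σ rb - σ ra| := le_abs_self _
      _ ≤ M * |rb - ra| := h1
      _ ≤ M * (t - s) := by nlinarith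
  have hτσ : ∀ r ∈ Set.Icc s t, τ (σ r) = r := fun r hr => (hσinv r (hIccsub hr)).1
  have hστ : ∀ x ∈ A, σ (τ x) = x := by
    rintro x ⟨r, hr, rfl⟩
    rw [hτσ r hr]
  have hinj : Set.InjOn τ (Set.Icc a b) := by
    intro x hx y hy hxy
    have hx' : x ∈ A := by rw [hAIcc]; exact hx
    have hy' : y ∈ A := by rw [hAIcc]; exact hy
    rw [← hστ x hx', ← hστ y hy', hxy]
  have himg : τ '' Set.Icc a b = Set.Icc s t := by
    rw [← hAIcc, hAdef, Set.image_image, Set.image_congr hτσ, Set.image_id']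
  set f : ℝ → ℂ := fun r => Complex.exp (Complex.I * ((inner ℝ ξ (w r) : ℝ) : ℂ)) with hfdef
  have hfm : Measurable f := by
    apply Complex.continuous_exp.measurable.comp
    exact (Complex.measurable_ofReal.comp (measurable_const.inner hw)).const_mul Complex.I
  have hf1 : ∀ r, ‖f r‖ ≤ 1 := by
    intro r
    have h : ‖f r‖ = 1 := by
      simp [hfdef, Complex.norm_exp, Complex.mul_re]
    linarith
  have hfF : ∀ u v : ℝ, a ≤ u → u ≤ v → v ≤ b →
      ‖∫ r in u..v, f r‖ ≤ Kρ * (v - u) ^ γ := by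
    intro u v hu huv hv
    have h1 := hirr ξ hξ u v (le_trans ha0 hu) huv (le_trans hv hbT)
    calc ‖∫ r in u..v, f r‖ = ‖phiW w ξ u v‖ := rfl
      _ ≤ K * ‖ξ‖ ^ (-ρ) * (v - u) ^ γ := h1
      _ = Kρ * (v - u) ^ γ := by rw [hKdef]
  set g : ℝ → ℝ := fun u => |τ' u| with hgdef
  have hgb : ∀ u ∈ Set.Icc a b, |g u| ≤ N := by
    intro u hu
    simp only [hgdef, abs_abs]
    exact hτb u (habsub hu)
  have hgh : ∀ u ∈ Set.Icc a b, ∀ v ∈ Set.Icc a b, |g v - g u| ≤ N * |v - u| ^ β := by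
    intro u hu v hv
    calc |g v - g u| ≤ |τ' v - τ' u| := abs_abs_sub_abs_le_abs_sub _ _
      _ ≤ N * |v - u| ^ β := hτh u (habsub hu) v (habsub hv)
  have hgc : ContinuousOn g (Set.Icc a b) := continuousOn_of_holder hβ hgh
  have hder : ∀ x ∈ Set.Icc a b, HasDerivWithinAt τ (τ' x) (Set.Icc a b) x :=
    fun x hx => (hτd x (habsub hx)).hasDerivWithinAt
  have hcov : (∫ r in Set.Icc s t, f (σ r)) = ∫ x in Set.Icc a b, |τ' x| • f (σ (τ x)) := by
    rw [← himg]
    exact integral_image_eq_integral_abs_deriv_smul measurableSet_Icc hder hinj _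
  have hcov2 : (∫ x in Set.Icc a b, |τ' x| • f (σ (τ x))) = ∫ x in Set.Icc a b, g x • f x := by
    apply setIntegral_congr_fun measurableSet_Icc
    intro x hx
    have hx' : x ∈ A := by rw [hAIcc]; exact hx
    simp only [hgdef]
    rw [hστ x hx']
  have hLHS : (∫ r in s..t, Complex.exp (Complex.I * ((inner ℝ ξ (w (σ r)) : ℝ) : ℂ)))
      = ∫ r in Set.Icc s t, f (σ r) := by
    rw [intervalIntegral.integral_of_le hst, ← integral_Icc_eq_integral_Ioc]
  have hRHS : (∫ x in a..b, g x • f x) = ∫ x in Set.Icc a b, g x • f x := by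
    rw [intervalIntegral.integral_of_le hab, ← integral_Icc_eq_integral_Ioc]
  have hyoung := young_estimate hab hγ hβ hβγ hN0 hN0 hKρ hfm hf1 hgb hgc hgh hfF
  rw [show (∫ r in s..t, Complex.exp (Complex.I * ((inner ℝ ξ (w (σ r)) : ℝ) : ℂ)))
      = ∫ x in a..b, g x • f x from hLHS.trans (hcov.trans (hcov2.trans hRHS.symm))]
  refine le_trans hyoung ?_
  have hba0 : 0 ≤ b - a := sub_nonneg.2 hab
  have hts0 : 0 ≤ t - s := sub_nonneg.2 hst
  have h1 : (b - a) ^ γ ≤ M * (t - s) ^ γ := by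
    calc (b - a) ^ γ ≤ (M * (t - s)) ^ γ := Real.rpow_le_rpow hba0 hbaM hγ.le
      _ = M ^ γ * (t - s) ^ γ := Real.mul_rpow hM0 hts0
      _ ≤ M * (t - s) ^ γ := by
          have hMγ : M ^ γ ≤ M := by
            calc M ^ γ ≤ M ^ (1:ℝ) := Real.rpow_le_rpow_of_exponent_le hM hγ1
              _ = M := Real.rpow_one M
          exact mul_le_mul_of_nonneg_right hMγ (Real.rpow_nonneg hts0 _)
  have h2 : (b - a) ^ (β + γ) ≤ T ^ β * (M * (t - s) ^ γ) := by
    rw [Real.rpow_add' hba0 (by linarith : β + γ ≠ 0)]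
    have h3 : (b - a) ^ β ≤ T ^ β :=
      Real.rpow_le_rpow hba0 (by linarith [(habsub (Set.left_mem_Icc.2 hab)).1,
        (habsub (Set.right_mem_Icc.2 hab)).2] : b - a ≤ T) hβ.le
    have h4 := mul_le_mul h3 h1 (Real.rpow_nonneg hba0 _) hTβ.le
    linarith
  calc N * (Kρ * (b - a) ^ γ) + N * Kρ * (b - a) ^ (β + γ) * (1 - q)⁻¹
      ≤ N * (Kρ * (M * (t - s) ^ γ)) + N * Kρ * (T ^ β * (M * (t - s) ^ γ)) * (1 - q)⁻¹ := by
        have e1 : N * (Kρ * (b - a) ^ γ) ≤ N * (Kρ * (M * (t - s) ^ γ)) :=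
          mul_le_mul_of_nonneg_left (mul_le_mul_of_nonneg_left h1 hKρ) hN0
        have e2 : N * Kρ * (b - a) ^ (β + γ) * (1 - q)⁻¹
            ≤ N * Kρ * (T ^ β * (M * (t - s) ^ γ)) * (1 - q)⁻¹ :=
          mul_le_mul_of_nonneg_right
            (mul_le_mul_of_nonneg_left h2 (mul_nonneg hN0 hKρ)) hqi.le
        linarith
    _ = (1 + T ^ β * (1 - q)⁻¹) * M * N * K * (t - s) ^ γ * ‖ξ‖ ^ (-ρ) := by
        rw [hKdef]; ring
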